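/- arXiv:2602.18800 — 6 statements merged into one kernel-verified Lean document; each statement's English description precedes it below -/
import Mathlib

section
/- Assume there exists at least one point y ∈ Ds with Safe(y). Then for every x ∈ Ds, if dist(x, t) < ∇ then Safe(x). (Lemma 3 / lmmC: every point of the scenario sub-domain strictly closer to the seed than the maximal safe distance is safe.) -/
/-- A point `x` of the scenario sub-domain `Ds` is safe (w.r.t. seed `t`) if the model
does not fail on `x` and does not fail on any point of `Ds` strictly closer to `t`. -/
def Safe {D : Type*} [MetricSpace D] (t : D) (Ds : Set D) (Fail : D → Prop) (x : D) : Prop :=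
  ¬ Fail x ∧ ∀ x' ∈ Ds, dist x' t < dist x t → ¬ Fail x'

/-- Lemma 3 (lmmC): every point of the scenario sub-domain strictly closer to the seed
than the maximal safe distance is safe. -/
theorem lmmC {D : Type*} [MetricSpace D] (t : D) (Ds : Set D) (Fail : D → Prop)
    (hne : ∃ y ∈ Ds, Safe t Ds Fail y) :
    ∀ x ∈ Ds,
      dist x t < sSup {d : ℝ | ∃ y ∈ Ds, Safe t Ds Fail y ∧ dist y t = d} →
        Safe t Ds Fail x := by
  intro x hx hlt
  set S : Set ℝ := {d : ℝ | ∃ y ∈ Ds, Safe t Ds Fail y ∧ dist y t = d} with hS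
  obtain ⟨y0, hy0, hsafe0⟩ := hne
  have hSne : S.Nonempty := ⟨dist y0 t, y0, hy0, hsafe0, rfl⟩
  by_cases hbdd : BddAbove S
  · obtain ⟨d, hdS, hxd⟩ := exists_lt_of_lt_csSup hSne hlt
    obtain ⟨y, hy, hsafe, hdy⟩ := hdS
    subst hdy
    refine ⟨hsafe.2 x hx hxd, fun x' hx' hx'lt => hsafe.2 x' hx' (hx'lt.trans hxd)⟩
  · rw [Real.sSup_of_not_bddAbove hbdd] at hlt
    exact absurd hlt (not_lt.mpr dist_nonneg)
end

section
/- Let Mut ⊆ Mut' be two sets of mutants with Mut' ⊆ Ds. Assume there exists at least one point y ∈ Ds with Safe(y). Let α* ∈ Mut with ¬Fail(α*) and dist(α*, t) ≤ ∇, and let β* be a last success of Mut'. Then dist(α*, t) ≤ dist(β*, t). (Theorem 2, statement (2): if the last success of the smaller set lies within the maximal safe distance, expanding the mutant set can only move the last success farther from the seed.) -/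
/-- A point `b` is a last success of the set `S` (w.r.t. seed `t`) if `b ∈ S`, the model
does not fail on `b` nor on any point of `S` strictly closer to `t`, and `b` is maximal
in distance to `t` among the points of `S` with these properties. -/
def LastSuccess {D : Type*} [MetricSpace D] (t : D) (Fail : D → Prop)
    (S : Set D) (b : D) : Prop :=
  b ∈ S ∧ ¬ Fail b ∧ (∀ x ∈ S, dist x t < dist b t → ¬ Fail x) ∧
    ∀ τ ∈ S, (¬ Fail τ ∧ ∀ x ∈ S, dist x t < dist τ t → ¬ Fail x) → dist τ t ≤ dist b t

/-- Theorem 2, statement (2): if the last success of the smaller set lies within the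
maximal safe distance, expanding the mutant set can only move the last success farther
from the seed. -/
theorem expansion_last_success {D : Type*} [MetricSpace D] (t : D) (Ds : Set D)
    (Fail : D → Prop) (Mut Mut' : Set D)
    (hsub : Mut ⊆ Mut') (hvalid : Mut' ⊆ Ds)
    (hne : ∃ y ∈ Ds, Safe t Ds Fail y)
    (αs : D) (hαs_mem : αs ∈ Mut) (hαs_nf : ¬ Fail αs)
    (hαs_le : dist αs t ≤ sSup {d : ℝ | ∃ y ∈ Ds, Safe t Ds Fail y ∧ dist y t = d})
    (βs : D) (hβs : LastSuccess t Fail Mut' βs) :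
    dist αs t ≤ dist βs t := by
  obtain ⟨hβmem, hβnf, hβall, hβmax⟩ := hβs
  apply hβmax αs (hsub hαs_mem)
  refine ⟨hαs_nf, fun x hx hlt => ?_⟩
  by_cases hbdd : BddAbove {d : ℝ | ∃ y ∈ Ds, Safe t Ds Fail y ∧ dist y t = d}
  · have hlt' : dist x t < sSup {d : ℝ | ∃ y ∈ Ds, Safe t Ds Fail y ∧ dist y t = d} :=
      lt_of_lt_of_le hlt hαs_le
    obtain ⟨y, hyDs, hySafe⟩ := hne
    have hnonempty : {d : ℝ | ∃ y ∈ Ds, Safe t Ds Fail y ∧ dist y t = d}.Nonempty :=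
      ⟨dist y t, y, hyDs, hySafe, rfl⟩
    obtain ⟨d, ⟨z, hzDs, hzSafe, hzd⟩, hd⟩ := (lt_csSup_iff hbdd hnonempty).mp hlt'
    exact hzSafe.2 x (hvalid hx) (by rw [hzd]; exact hd)
  · rw [Real.sSup_of_not_bddAbove hbdd] at hαs_le
    exact absurd (lt_of_lt_of_le hlt hαs_le) (not_lt.mpr dist_nonneg)
end

section
/- Let Mut ⊆ Mut' be two sets of mutants such that ¬Fail(x) for every x ∈ Mut. Let α° be a first failure of Mut' \ Mut, α* a last success of Mut' \ Mut, and β* a last success of Mut'. If dist(α*, t) = dist(α°, t), then dist(β*, t) ≤ dist(α*, t) and there is no x ∈ Mut' such that dist(β*, t) < dist(x, t) < dist(α*, t). (Theorem 3, statement (2).) -/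
/-- A point `a` is a first failure of the set `S` (w.r.t. seed `t`) if `a ∈ S`, the model
fails on `a`, and it does not fail on any point of `S` strictly closer to `t`. -/
def FirstFailure {D : Type*} [MetricSpace D] (t : D) (Fail : D → Prop)
    (S : Set D) (a : D) : Prop :=
  a ∈ S ∧ Fail a ∧ ∀ x ∈ S, dist x t < dist a t → ¬ Fail x

/-- Theorem 3, statement (2). -/
theorem incremental_last_success_eq {D : Type*} [MetricSpace D] (t : D) (Fail : D → Prop)
    (Mut Mut' : Set D) (hsub : Mut ⊆ Mut') (hnf : ∀ x ∈ Mut, ¬ Fail x)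
    (αo : D) (hαo : FirstFailure t Fail (Mut' \ Mut) αo)
    (αs : D) (hαs : LastSuccess t Fail (Mut' \ Mut) αs)
    (βs : D) (hβs : LastSuccess t Fail Mut' βs)
    (heq : dist αs t = dist αo t) :
    dist βs t ≤ dist αs t ∧
      ¬ ∃ x ∈ Mut', dist βs t < dist x t ∧ dist x t < dist αs t := by
  obtain ⟨hαoS, hαoF, hαomin⟩ := hαo
  obtain ⟨hαsS, hαsNF, hαsmin, hαsmax⟩ := hαs
  obtain ⟨hβsS, hβsNF, hβsmin, hβsmax⟩ := hβs
  have key : ∀ y ∈ Mut', dist y t < dist αs t → ¬ Fail y := by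
    intro y hy hlt
    by_cases hm : y ∈ Mut
    · exact hnf y hm
    · exact hαsmin y ⟨hy, hm⟩ hlt
  have h1 : dist βs t ≤ dist αs t := by
    by_contra h
    push_neg at h
    exact hβsmin αo hαoS.1 (heq ▸ h) hαoF
  refine ⟨h1, ?_⟩
  rintro ⟨x, hx, hlt1, hlt2⟩
  have : dist x t ≤ dist βs t := by
    refine hβsmax x hx ⟨key x hx hlt2, fun y hy hylt => key y hy (hylt.trans hlt2)⟩
  linarith
end

section
/- Let Mut ⊆ Mut' be two sets of mutants such that ¬Fail(x) for every x ∈ Mut, let α° be a first failure of Mut' \ Mut and α* a last success of Mut' \ Mut. Then: (i) α° is a first failure of Mut'; and (ii) if dist(α*, t) = dist(α°, t), then α* is a last success of Mut'. (Corollary of Theorem 3: when no original mutant fails, the first failure and, in the equal-distance case, the last success found among the newly added mutants serve as the first failure and last success of the whole expanded set, so the testing process can proceed incrementally.) -/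
/-- Corollary of Theorem 3: when no original mutant fails, the first failure found among
the newly added mutants is a first failure of the whole expanded set, and in the
equal-distance case the last success found among the newly added mutants is a last
success of the whole expanded set. -/
theorem incremental_corollary {D : Type*} [MetricSpace D] (t : D) (Fail : D → Prop)
    (Mut Mut' : Set D) (hsub : Mut ⊆ Mut') (hnf : ∀ x ∈ Mut, ¬ Fail x)
    (αo : D) (hαo : FirstFailure t Fail (Mut' \ Mut) αo)
    (αs : D) (hαs : LastSuccess t Fail (Mut' \ Mut) αs) :
    FirstFailure t Fail Mut' αo ∧
      (dist αs t = dist αo t → LastSuccess t Fail Mut' αs) := by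
  obtain ⟨haoS, haoF, haoMin⟩ := hαo
  obtain ⟨hasS, hasNF, hasMin, hasMax⟩ := hαs
  constructor
  · refine ⟨haoS.1, haoF, fun x hx hlt => ?_⟩
    by_cases hm : x ∈ Mut
    · exact hnf x hm
    · exact haoMin x ⟨hx, hm⟩ hlt
  · intro heq
    refine ⟨hasS.1, hasNF, fun x hx hlt => ?_, fun τ hτ ⟨hτNF, hτMin⟩ => ?_⟩
    · by_cases hm : x ∈ Mut
      · exact hnf x hm
      · exact hasMin x ⟨hx, hm⟩ hlt
    · by_contra hgt
      push_neg at hgt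
      rw [heq] at hgt
      exact hτMin αo haoS.1 hgt haoF
end

section
/- Let Mut ⊆ D be a set of mutants that is valid (Mut ⊆ Ds) and complete with coverage size δ (every x ∈ Ds with dist(x, t) ≤ δ belongs to Mut), let FF be a first failure of Mut, and assume δ ≥ dist(FF, t). Then dist(FF, t) = Δ. (Theorem 4: under validity and sufficient coverage, the distance from the seed to the first failure mutant equals the minimal distance to failure in the scenario sub-domain.) -/
/-- Theorem 4: under validity and sufficient coverage, the distance from the seed to the
first failure mutant equals the minimal distance to failure in the scenario sub-domain. -/
theorem first_failure_eq_min_distance {D : Type*} [MetricSpace D] (t : D) (Ds : Set D)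
    (Fail : D → Prop) (Mut : Set D) (δ : ℝ)
    (hvalid : Mut ⊆ Ds)
    (hcomplete : ∀ x ∈ Ds, dist x t ≤ δ → x ∈ Mut)
    (FF : D) (hFF : FirstFailure t Fail Mut FF)
    (hδ : δ ≥ dist FF t) :
    dist FF t = sInf {d : ℝ | ∃ y ∈ Ds, Fail y ∧ dist y t = d} := by
  obtain ⟨hmem, hfail, hmin⟩ := hFF
  have hlb : ∀ d ∈ {d : ℝ | ∃ y ∈ Ds, Fail y ∧ dist y t = d}, dist FF t ≤ d := by
    rintro d ⟨y, hy, hfy, rfl⟩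
    by_contra h
    push_neg at h
    exact hmin y (hcomplete y hy (le_trans h.le hδ)) h hfy
  have hFFmem : dist FF t ∈ {d : ℝ | ∃ y ∈ Ds, Fail y ∧ dist y t = d} :=
    ⟨FF, hvalid hmem, hfail, rfl⟩
  exact le_antisymm (le_csInf ⟨_, hFFmem⟩ hlb)
    (csInf_le ⟨dist FF t, hlb⟩ hFFmem)
end

section
/- Let Mut ⊆ D be a set of mutants that is valid (Mut ⊆ Ds) and complete with coverage size δ (every x ∈ Ds with dist(x, t) ≤ δ belongs to Mut), let FF be a first failure of Mut and LS a last success of Mut paired with FF (so LS ∈ Mut, ¬Fail(LS), ¬Fail(x) for every x ∈ Mut with dist(x, t) < dist(LS, t), dist(LS, t) ≤ dist(FF, t), and no x ∈ Mut satisfies dist(LS, t) < dist(x, t) < dist(FF, t)), and assume δ ≥ dist(FF, t). Then dist(LS, t) ≤ ∇ and there is no x ∈ Ds such that dist(LS, t) < dist(x, t) < ∇. (Theorem 5: under validity and sufficient coverage, the distance to the last successful mutant is either exactly the maximal safe distance or the best conservative estimate of it.) -/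
/-- Theorem 5: under validity and sufficient coverage, the distance to the last
successful mutant is either exactly the maximal safe distance or the best conservative
estimate of it. -/
theorem last_success_estimates_max_safe_distance {D : Type*} [MetricSpace D] (t : D)
    (Ds : Set D) (Fail : D → Prop) (Mut : Set D) (δ : ℝ)
    (hvalid : Mut ⊆ Ds)
    (hcomplete : ∀ x ∈ Ds, dist x t ≤ δ → x ∈ Mut)
    (FF : D) (hFF : FirstFailure t Fail Mut FF)
    (LS : D) (hLS_mem : LS ∈ Mut) (hLS_nf : ¬ Fail LS)
    (hLS_before : ∀ x ∈ Mut, dist x t < dist LS t → ¬ Fail x)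
    (hLS_le : dist LS t ≤ dist FF t)
    (hpaired : ¬ ∃ x ∈ Mut, dist LS t < dist x t ∧ dist x t < dist FF t)
    (hδ : δ ≥ dist FF t) :
    dist LS t ≤ sSup {d : ℝ | ∃ y ∈ Ds, Safe t Ds Fail y ∧ dist y t = d} ∧
      ¬ ∃ x ∈ Ds, dist LS t < dist x t ∧
        dist x t < sSup {d : ℝ | ∃ y ∈ Ds, Safe t Ds Fail y ∧ dist y t = d} := by
  obtain ⟨hFF_mem, hFF_fail, hFF_first⟩ := hFF
  have hLS_safe : Safe t Ds Fail LS := by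
    refine ⟨hLS_nf, fun x' hx' hlt => ?_⟩
    exact hLS_before x' (hcomplete x' hx' (le_of_lt (hlt.trans_le (hLS_le.trans hδ)))) hlt
  have hbdd : ∀ d ∈ {d : ℝ | ∃ y ∈ Ds, Safe t Ds Fail y ∧ dist y t = d}, d ≤ dist FF t := by
    rintro d ⟨y, hy, hsafe, rfl⟩
    by_contra h
    exact hsafe.2 FF (hvalid hFF_mem) (lt_of_not_ge h) hFF_fail
  have hmem : dist LS t ∈ {d : ℝ | ∃ y ∈ Ds, Safe t Ds Fail y ∧ dist y t = d} :=
    ⟨LS, hvalid hLS_mem, hLS_safe, rfl⟩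
  have hsup_le : sSup {d : ℝ | ∃ y ∈ Ds, Safe t Ds Fail y ∧ dist y t = d} ≤ dist FF t :=
    csSup_le ⟨_, hmem⟩ hbdd
  refine ⟨le_csSup ⟨dist FF t, hbdd⟩ hmem, ?_⟩
  rintro ⟨x, hx, h1, h2⟩
  have h3 : dist x t < dist FF t := h2.trans_le hsup_le
  exact hpaired ⟨x, hcomplete x hx (le_of_lt (h3.trans_le hδ)), h1, h3⟩
end
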